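/- Let U ∈ SL₂(ℤ), f a positive integer, and V = R_f U R_f⁻¹ where R_f = [[1,0],[0,f]]. Let q = ax² + bxy + cy² be an integral form with gcd(a, f) = 1. If q·V has integer coefficients, then V has integer entries (hence V ∈ SL₂(ℤ)). -/

import Mathlib

/-- A binary quadratic form ax² + bxy + cy² with rational coefficients. -/
structure BQFQ where
  a : ℚ
  b : ℚ
  c : ℚ

namespace BQFQ

/-- Value of the form at (x, y). -/
def eval (q : BQFQ) (x y : ℚ) : ℚ := q.a * x ^ 2 + q.b * x * y + q.c * y ^ 2

/-- Discriminant b² - 4ac. -/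
def disc (q : BQFQ) : ℚ := q.b ^ 2 - 4 * q.a * q.c

/-- Right action: (q·M)(x,y) = q(px + ry, sx + ty) for M = [[p,r],[s,t]]. -/
def act (q : BQFQ) (M : Matrix (Fin 2) (Fin 2) ℚ) : BQFQ :=
  ⟨q.eval (M 0 0) (M 1 0),
   q.eval (M 0 0 + M 0 1) (M 1 0 + M 1 1) - q.eval (M 0 0) (M 1 0) - q.eval (M 0 1) (M 1 1),
   q.eval (M 0 1) (M 1 1)⟩

end BQFQ

lemma key (a f β m : ℤ) (ha : IsCoprime a f) (h : f^2 ∣ β * (a*β + f*m)) : f ∣ β := by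
  rcases eq_or_ne f 0 with rfl | hf
  · rw [zero_dvd_iff]
    simp only [ne_eq, OfNat.ofNat_ne_zero, not_false_eq_true, zero_pow, zero_dvd_iff,
      zero_mul, add_zero, mul_eq_zero] at h
    rcases h with h1 | h1 | h1
    · exact h1
    · exact absurd h1 (by rintro rfl; exact not_isUnit_zero (isCoprime_zero_right.1 ha))
    · exact h1
  · set d : ℤ := (Int.gcd f β : ℤ) with hd
    have hd0 : d ≠ 0 := by
      simp only [hd, ne_eq, Int.natCast_eq_zero, Int.gcd_eq_zero_iff, not_and]
      tauto
    obtain ⟨f', hf'⟩ : d ∣ f := Int.gcd_dvd_left f β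
    obtain ⟨β', hβ'⟩ : d ∣ β := Int.gcd_dvd_right f β
    have hdpos : 0 < Int.gcd f β := Int.gcd_pos_iff.2 (Or.inl hf)
    have cop : IsCoprime f' β' := by
      rw [Int.isCoprime_iff_gcd_eq_one]
      have h7 := Int.gcd_div_gcd_div_gcd (i := f) (j := β) hdpos
      have e1 : f / d = f' := by rw [hf']; exact Int.mul_ediv_cancel_left _ hd0
      have e2 : β / d = β' := by rw [hβ']; exact Int.mul_ediv_cancel_left _ hd0
      rwa [← hd, e1, e2] at h7
    have h2 : f'^2 ∣ β' * (a*β' + f'*m) := by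
      have h8 : d^2 * f'^2 ∣ d^2 * (β' * (a*β' + f'*m)) := by
        obtain ⟨k, hk⟩ := h
        rw [hf', hβ'] at hk
        exact ⟨k, by linear_combination hk⟩
      exact (mul_dvd_mul_iff_left (pow_ne_zero 2 hd0)).1 h8
    have h3 : f' ∣ a * β' := by
      have h4 : f'^2 ∣ a*β' + f'*m := (cop.pow_left).dvd_of_dvd_mul_left h2
      have h5 : f' ∣ a*β' + f'*m := dvd_trans (dvd_pow_self f' two_ne_zero) h4
      exact (dvd_add_left (dvd_mul_right f' m)).1 h5
    have copaf' : IsCoprime a f' := ha.of_isCoprime_of_dvd_right ⟨d, by rw [hf']; ring⟩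
    have h6 : f' ∣ β' := copaf'.symm.dvd_of_dvd_mul_left h3
    have hu : IsUnit f' := cop.isUnit_of_dvd' dvd_rfl h6
    rcases Int.isUnit_iff.1 hu with rfl | rfl
    · rw [hf', mul_one]; exact ⟨β', hβ'⟩
    · rw [hf']; exact ⟨-β', by rw [hβ']; ring⟩

theorem stmt14 (U : Matrix.SpecialLinearGroup (Fin 2) ℤ) (f : ℤ)
    (hf : 0 < f) (V : Matrix (Fin 2) (Fin 2) ℚ)
    (hV : V = !![1, 0; 0, (f : ℚ)] * U.1.map (Int.cast : ℤ → ℚ) * !![1, 0; 0, ((f : ℚ))⁻¹])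
    (a b c : ℤ) (ha : Int.gcd a f = 1)
    (hint : (∃ n : ℤ, ((BQFQ.mk (a : ℚ) (b : ℚ) (c : ℚ)).act V).a = (n : ℚ)) ∧
            (∃ n : ℤ, ((BQFQ.mk (a : ℚ) (b : ℚ) (c : ℚ)).act V).b = (n : ℚ)) ∧
            (∃ n : ℤ, ((BQFQ.mk (a : ℚ) (b : ℚ) (c : ℚ)).act V).c = (n : ℚ))) :
    ∃ W : Matrix.SpecialLinearGroup (Fin 2) ℤ, W.1.map (Int.cast : ℤ → ℚ) = V := by
  set α := U.1 0 0 with hα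
  set β := U.1 0 1 with hβ
  set γ := U.1 1 0 with hγ
  set δ := U.1 1 1 with hδ
  have hdet : α * δ - β * γ = 1 := by
    have := U.2
    rwa [Matrix.det_fin_two] at this
  have hfQ : (f : ℚ) ≠ 0 := Int.cast_ne_zero.2 hf.ne'
  have hV00 : V 0 0 = (α : ℚ) := by
    rw [hV]
    simp [Matrix.mul_apply, Fin.sum_univ_two, Matrix.map_apply, Matrix.vecMul,
      dotProduct, Matrix.vecHead, Matrix.vecTail]
    rfl
  have hV01 : V 0 1 = (β : ℚ) * (f : ℚ)⁻¹ := by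
    rw [hV]
    simp [Matrix.mul_apply, Fin.sum_univ_two, Matrix.map_apply, Matrix.vecMul,
      dotProduct, Matrix.vecHead, Matrix.vecTail]
    exact Or.inl rfl
  have hV10 : V 1 0 = (f : ℚ) * (γ : ℚ) := by
    rw [hV]
    simp [Matrix.mul_apply, Fin.sum_univ_two, Matrix.map_apply, Matrix.vecMul,
      dotProduct, Matrix.vecHead, Matrix.vecTail]
    exact Or.inl rfl
  have hV11 : V 1 1 = (δ : ℚ) := by
    rw [hV]
    simp [Matrix.mul_apply, Fin.sum_univ_two, Matrix.map_apply, Matrix.vecMul,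
      dotProduct, Matrix.vecHead, Matrix.vecTail]
    rw [mul_right_comm, mul_inv_cancel₀ hfQ, one_mul]
  obtain ⟨n, hn⟩ := hint.2.2
  simp only [BQFQ.act, BQFQ.eval, hV01, hV11] at hn
  have hQ : ((a : ℚ) * β^2 + b*β*δ*f + c*δ^2*f^2) * f = (n * f^2) * f := by
    field_simp at hn
    linear_combination (f : ℚ) * hn
  have hZ : (a * β^2 + b*β*δ*f + c*δ^2*f^2) * f = (n * f^2) * f := by exact_mod_cast hQ
  have hZ' : a * β^2 + b*β*δ*f + c*δ^2*f^2 = n * f^2 := mul_right_cancel₀ hf.ne' hZ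
  have hdvd : f^2 ∣ β * (a*β + f*(b*δ)) := ⟨n - c*δ^2, by linarith [hZ']⟩
  have hcop : IsCoprime a f := Int.isCoprime_iff_gcd_eq_one.2 ha
  obtain ⟨e, he⟩ : f ∣ β := key a f β (b*δ) hcop hdvd
  refine ⟨⟨!![α, e; f*γ, δ], ?_⟩, ?_⟩
  · rw [Matrix.det_fin_two_of]
    have hh : β * γ = e * (f * γ) := by rw [he]; ring
    linarith [hdet]
  · have hVeq := Matrix.eta_fin_two V
    rw [hV00, hV01, hV10, hV11] at hVeq
    rw [hVeq]
    ext i j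
    fin_cases i <;> fin_cases j <;> simp [Matrix.map_apply]
    · rw [he]; push_cast; rw [mul_comm ((f:ℚ)) (e:ℚ), mul_assoc, mul_inv_cancel₀ hfQ, mul_one]
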